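/- Let n >= 1 be an integer and r0 > 0. There exists a constant C >= 0, depending only on n and r0, such that for every r in (0, r0] and every measurable function u : S -> R with |u(w)| <= 1/2 for all w in S, if the vector-valued barycenter constraint Int_S w * (1+u(w)) * ( Int_0^r sinh^{2n}( rho(1+u(w))/2 ) d rho ) dH(w) = 0 (an identity in R^{2n}) holds, then || Int_S u(w) * w dH(w) || <= C * Int_S u^2 dH. -/

import Mathlib

open MeasureTheory Real ENNReal


noncomputable def stereo (m : ℕ) (x : EuclideanSpace ℝ (Fin m)) : EuclideanSpace ℝ (Fin (m+1)) :=
  WithLp.toLp 2 (Fin.snoc (α := fun _ => ℝ) (fun i => 2 * x i / (1 + ‖x‖^2)) ((‖x‖^2 - 1) / (1 + ‖x‖^2)))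

lemma euclid_norm_sq {k : ℕ} (v : EuclideanSpace ℝ (Fin k)) : ‖v‖^2 = ∑ i, v i ^ 2 := by
  rw [EuclideanSpace.norm_eq, Real.sq_sqrt (by positivity)]
  simp [Real.norm_eq_abs, sq_abs]

lemma stereo_lipschitz (m : ℕ) : LipschitzWith 2 (stereo m) := by
  apply LipschitzWith.of_dist_le_mul
  intro x y
  rw [dist_eq_norm, dist_eq_norm]
  have hx : (0:ℝ) ≤ ‖x - y‖ := norm_nonneg _
  have h2 : ‖stereo m x - stereo m y‖^2 ≤ (2 * ‖x - y‖)^2 := by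
    set A := ‖x‖^2 with hA
    set B := ‖y‖^2 with hB
    have hA0 : 0 ≤ A := sq_nonneg _
    have hB0 : 0 ≤ B := sq_nonneg _
    have hAs : A = ∑ i, x i ^ 2 := euclid_norm_sq x
    have hBs : B = ∑ i, y i ^ 2 := euclid_norm_sq y
    have hxy : ‖x - y‖^2 = A + B - 2 * ∑ i, x i * y i := by
      rw [euclid_norm_sq (x - y), hAs, hBs]
      have h1 : ∀ i : Fin m, (x - y) i ^ 2 = x i ^2 + y i ^2 - 2 * (x i * y i) := by
        intro i
        have : (x - y) i = x i - y i := rfl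
        rw [this]; ring
      rw [Finset.sum_congr rfl (fun i _ => h1 i), Finset.sum_sub_distrib,
        Finset.sum_add_distrib, ← Finset.mul_sum]
    have hstereo : ‖stereo m x - stereo m y‖^2
        = ∑ i : Fin m, (2 * x i / (1+A) - 2 * y i / (1+B))^2
          + ((A-1)/(1+A) - (B-1)/(1+B))^2 := by
      rw [euclid_norm_sq (stereo m x - stereo m y), Fin.sum_univ_castSucc]
      congr 1
      · apply Finset.sum_congr rfl
        intro i _
        have : (stereo m x - stereo m y) (Fin.castSucc i)
            = 2 * x i / (1+A) - 2 * y i / (1+B) := by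
          show stereo m x (Fin.castSucc i) - stereo m y (Fin.castSucc i) = _
          simp [stereo, hA, hB]
        rw [this]
      · have : (stereo m x - stereo m y) (Fin.last m)
            = (A-1)/(1+A) - (B-1)/(1+B) := by
          show stereo m x (Fin.last m) - stereo m y (Fin.last m) = _
          simp [stereo, hA, hB]
        rw [this]
    set T := ∑ i, x i * y i with hT
    have hA1 : (0:ℝ) < 1 + A := by linarith
    have hB1 : (0:ℝ) < 1 + B := by linarith
    have hsum : ∑ i : Fin m, (2 * x i / (1+A) - 2 * y i / (1+B))^2
        = 4 * A / (1+A)^2 - 8 * T / ((1+A)*(1+B)) + 4 * B / (1+B)^2 := by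
      have : ∀ i : Fin m, (2 * x i / (1+A) - 2 * y i / (1+B))^2
          = (4 / (1+A)^2) * x i ^2 - (8 / ((1+A)*(1+B))) * (x i * y i)
            + (4 / (1+B)^2) * y i ^2 := by
        intro i; field_simp; ring
      rw [Finset.sum_congr rfl (fun i _ => this i)]
      rw [Finset.sum_add_distrib, Finset.sum_sub_distrib, ← Finset.mul_sum, ← Finset.mul_sum,
        ← Finset.mul_sum, ← hAs, ← hBs, ← hT]
      ring
    have key : ‖stereo m x - stereo m y‖^2 = 4 * (A + B - 2*T) / ((1+A)*(1+B)) := by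
      rw [hstereo, hsum]
      field_simp
      ring
    rw [key]
    have hS : 0 ≤ A + B - 2*T := by rw [← hxy]; positivity
    have hD : 1 ≤ (1+A)*(1+B) := by nlinarith
    calc 4 * (A + B - 2*T) / ((1+A)*(1+B)) ≤ 4 * (A + B - 2*T) := by
          apply div_le_self (by linarith) hD
      _ = (2 * ‖x - y‖)^2 := by rw [mul_pow]; rw [hxy]; ring
  have h3 := Real.sqrt_le_sqrt h2
  rw [Real.sqrt_sq (norm_nonneg _), Real.sqrt_sq (by positivity)] at h3
  calc ‖stereo m x - stereo m y‖ ≤ 2 * ‖x - y‖ := h3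
    _ = (2:NNReal) * ‖x - y‖ := by norm_num

lemma stereo_castSucc (m : ℕ) (x : EuclideanSpace ℝ (Fin m)) (i : Fin m) :
    stereo m x (Fin.castSucc i) = 2 * x i / (1 + ‖x‖^2) := by
  simp [stereo]

lemma stereo_last (m : ℕ) (x : EuclideanSpace ℝ (Fin m)) :
    stereo m x (Fin.last m) = (‖x‖^2 - 1) / (1 + ‖x‖^2) := by
  simp [stereo]

lemma hemisphere_sub (m : ℕ) :
    {w ∈ Metric.sphere (0 : EuclideanSpace ℝ (Fin (m+1))) 1 | w (Fin.last m) ≤ 0}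
      ⊆ stereo m '' (Metric.closedBall 0 1) := by
  rintro w ⟨hw, hwl⟩
  have hnw : ‖w‖ = 1 := by simpa using hw
  set l := w (Fin.last m) with hl
  have hsum : ∑ i : Fin (m+1), w i ^ 2 = 1 := by
    rw [← euclid_norm_sq, hnw]; norm_num
  have hsum' : ∑ i : Fin m, w (Fin.castSucc i) ^ 2 = 1 - l^2 := by
    rw [Fin.sum_univ_castSucc] at hsum; linarith
  have hld : (0:ℝ) < 1 - l := by linarith
  set x : EuclideanSpace ℝ (Fin m) := WithLp.toLp 2 (fun i => w (Fin.castSucc i) / (1 - l)) with hx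
  have hA : ‖x‖^2 = (1 + l) / (1 - l) := by
    rw [euclid_norm_sq]
    have : ∀ i : Fin m, x i ^ 2 = w (Fin.castSucc i) ^2 / (1-l)^2 := by
      intro i; rw [hx]; simp only [PiLp.toLp_apply]; rw [div_pow]
    rw [Finset.sum_congr rfl (fun i _ => this i), ← Finset.sum_div, hsum']
    have h1 : 1 - l^2 = (1-l) * (1+l) := by ring
    rw [h1]
    field_simp
  have hA1 : 1 + ‖x‖^2 = 2 / (1 - l) := by
    rw [hA]; field_simp; norm_num
  refine ⟨x, ?_, ?_⟩
  · rw [Metric.mem_closedBall, dist_zero_right]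
    have h2 : ‖x‖^2 ≤ 1 := by rw [hA]; rw [div_le_one hld]; linarith
    nlinarith [norm_nonneg x]
  · ext i
    refine Fin.lastCases ?_ ?_ i
    · rw [stereo_last, hA1, hA, ← hl]
      field_simp
      ring
    · intro i
      rw [stereo_castSucc, hA1, hx]
      simp only [PiLp.toLp_apply]
      field_simp


lemma ball_hausdorff_finite (m : ℕ) (R : ℝ) :
    μH[(m:ℝ)] (Metric.closedBall (0 : EuclideanSpace ℝ (Fin m)) R) < ⊤ := by
  set e := EuclideanSpace.equiv (Fin m) ℝ
  set L := e.symm.toContinuousLinearMap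
  set R' := ‖e.toContinuousLinearMap‖ * |R|
  have hsub : Metric.closedBall (0 : EuclideanSpace ℝ (Fin m)) R
      ⊆ L '' (Metric.closedBall (0 : Fin m → ℝ) R') := by
    intro y hy
    refine ⟨e y, ?_, by simp [L, e]⟩
    rw [Metric.mem_closedBall, dist_zero_right]
    calc ‖e.toContinuousLinearMap y‖ ≤ ‖e.toContinuousLinearMap‖ * ‖y‖ :=
          e.toContinuousLinearMap.le_opNorm y
      _ ≤ ‖e.toContinuousLinearMap‖ * |R| := by
          apply mul_le_mul_of_nonneg_left _ (norm_nonneg _)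
          rw [Metric.mem_closedBall, dist_zero_right] at hy
          exact hy.trans (le_abs_self R)
  have hle := (L.lipschitz.hausdorffMeasure_image_le (by positivity : (0:ℝ) ≤ (m:ℝ))
    (Metric.closedBall (0 : Fin m → ℝ) R'))
  have hpi : μH[(m:ℝ)] (Metric.closedBall (0 : Fin m → ℝ) R') < ⊤ := by
    have hcard : ((Fintype.card (Fin m) : ℝ)) = (m:ℝ) := by simp
    rw [← hcard, hausdorffMeasure_pi_real]
    exact (isCompact_closedBall _ _).measure_lt_top
  calc μH[(m:ℝ)] (Metric.closedBall (0 : EuclideanSpace ℝ (Fin m)) R)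
      ≤ μH[(m:ℝ)] (L '' (Metric.closedBall (0 : Fin m → ℝ) R')) := measure_mono hsub
    _ ≤ (‖L‖₊ : ℝ≥0∞) ^ (m:ℝ) * μH[(m:ℝ)] (Metric.closedBall (0 : Fin m → ℝ) R') := hle
    _ < ⊤ := ENNReal.mul_lt_top
        (ENNReal.rpow_lt_top_of_nonneg (by positivity) ENNReal.coe_ne_top) hpi

lemma sphere_hausdorff_finite (m : ℕ) :
    μH[(m:ℝ)] (Metric.sphere (0 : EuclideanSpace ℝ (Fin (m+1))) 1) < ⊤ := by
  set B := Metric.closedBall (0 : EuclideanSpace ℝ (Fin m)) 1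
  set I := stereo m '' B
  have hcover : Metric.sphere (0 : EuclideanSpace ℝ (Fin (m+1))) 1 ⊆ I ∪ (Neg.neg '' I) := by
    intro w hw
    rcases le_or_gt (w (Fin.last m)) 0 with h | h
    · exact Or.inl (hemisphere_sub m ⟨hw, h⟩)
    · right
      refine ⟨-w, hemisphere_sub m ⟨?_, ?_⟩, by simp⟩
      · simpa using hw
      · show (-w) (Fin.last m) ≤ 0
        have : (-w) (Fin.last m) = -(w (Fin.last m)) := rfl
        rw [this]; linarith
  have hI : μH[(m:ℝ)] I ≤ (2 : ℝ≥0∞) ^ (m:ℝ) * μH[(m:ℝ)] B := by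
    simpa using (stereo_lipschitz m).hausdorffMeasure_image_le
      (by positivity : (0:ℝ) ≤ (m:ℝ)) B
  have hIlt : μH[(m:ℝ)] I < ⊤ :=
    lt_of_le_of_lt hI (ENNReal.mul_lt_top
      (ENNReal.rpow_lt_top_of_nonneg (by positivity) (by norm_num)) (ball_hausdorff_finite m 1))
  have hneg : μH[(m:ℝ)] (Neg.neg '' I) = μH[(m:ℝ)] I :=
    isometry_neg.hausdorffMeasure_image (Or.inr neg_surjective) I
  calc μH[(m:ℝ)] (Metric.sphere (0 : EuclideanSpace ℝ (Fin (m+1))) 1)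
      ≤ μH[(m:ℝ)] (I ∪ Neg.neg '' I) := measure_mono hcover
    _ ≤ μH[(m:ℝ)] I + μH[(m:ℝ)] (Neg.neg '' I) := measure_union_le _ _
    _ < ⊤ := by rw [hneg]; exact ENNReal.add_lt_top.mpr ⟨hIlt, hIlt⟩


lemma sphere_hausdorff_finite' (k : ℕ) (hk : 1 ≤ k) :
    μH[((k - 1 : ℕ) : ℝ)] (Metric.sphere (0 : EuclideanSpace ℝ (Fin k)) 1) < ⊤ := by
  obtain ⟨m, rfl⟩ : ∃ m, k = m + 1 := ⟨k - 1, by omega⟩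
  simpa using sphere_hausdorff_finite m

lemma integral_id_sphere_zero (k : ℕ) (d : ℝ) (hd : 0 ≤ d) :
    ∫ w in Metric.sphere (0 : EuclideanSpace ℝ (Fin k)) 1, w ∂μH[d]
      = (0 : EuclideanSpace ℝ (Fin k)) := by
  set E := EuclideanSpace ℝ (Fin k)
  set S := Metric.sphere (0 : E) 1
  have hSm : MeasurableSet S := Metric.isClosed_sphere.measurableSet
  have hneg : Measure.map (fun x : E => -x) (μH[d].restrict S) = μH[d].restrict S := by
    have h1 : Measure.map (fun x : E => -x) μH[d] = μH[d] := by
      have := isometry_neg.map_hausdorffMeasure (X := E) (d := d) (Or.inl hd)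
      rw [Set.range_eq_univ.2 neg_surjective, Measure.restrict_univ] at this
      exact this
    have h2 : (fun x : E => -x) ⁻¹' S = S := by
      ext x
      simp [S]
    conv_rhs => rw [← h1]
    rw [Measure.restrict_map measurable_neg hSm, h2]
  have hmp : MeasurePreserving (fun x : E => -x) (μH[d].restrict S) (μH[d].restrict S) :=
    ⟨measurable_neg, hneg⟩
  have hemb : MeasurableEmbedding (fun x : E => -x) :=
    (Homeomorph.neg E).measurableEmbedding
  have h3 : ∫ x in S, (-x) ∂μH[d] = ∫ x in S, x ∂μH[d] :=
    hmp.integral_comp hemb (fun x => x)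
  rw [integral_neg] at h3
  have h4 : (2:ℝ) • (∫ x in S, x ∂μH[d]) = 0 := by
    rw [two_smul]
    nth_rewrite 1 [← h3]
    exact neg_add_cancel _
  have := smul_eq_zero.mp h4
  rcases this with h | h
  · norm_num at h
  · exact h


noncomputable def Gint (N : ℕ) (x : ℝ) : ℝ := ∫ s in (0:ℝ)..x, Real.sinh (s/2) ^ N

lemma Gint_cont_integrand (N : ℕ) : Continuous (fun s : ℝ => Real.sinh (s/2) ^ N) :=
  (Real.continuous_sinh.comp (continuous_id.div_const 2)).pow N

lemma Gint_hasDerivAt (N : ℕ) (x : ℝ) :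
    HasDerivAt (Gint N) (Real.sinh (x/2) ^ N) x := by
  apply intervalIntegral.integral_hasDerivAt_right
  · exact (Gint_cont_integrand N).intervalIntegrable _ _
  · exact (Gint_cont_integrand N).stronglyMeasurable.stronglyMeasurableAtFilter
  · exact (Gint_cont_integrand N).continuousAt

lemma sinh_pow_lipschitz (N : ℕ) (R : ℝ) (hR : 0 ≤ R) (a b : ℝ)
    (ha : a ∈ Set.Icc 0 R) (hb : b ∈ Set.Icc 0 R) :
    |Real.sinh a ^ N - Real.sinh b ^ N|
      ≤ (N * Real.sinh R ^ (N-1) * Real.cosh R) * |a - b| := by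
  have hderiv : ∀ x ∈ Set.Icc (0:ℝ) R,
      HasDerivWithinAt (fun y => Real.sinh y ^ N)
        ((N:ℝ) * Real.sinh x ^ (N-1) * Real.cosh x) (Set.Icc 0 R) x := by
    intro x _
    exact ((Real.hasDerivAt_sinh x).pow N).hasDerivWithinAt
  have hbound : ∀ x ∈ Set.Icc (0:ℝ) R,
      ‖(N:ℝ) * Real.sinh x ^ (N-1) * Real.cosh x‖
        ≤ N * Real.sinh R ^ (N-1) * Real.cosh R := by
    intro x hx
    have h1 : 0 ≤ Real.sinh x := Real.sinh_nonneg_iff.mpr hx.1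
    have h2 : Real.sinh x ≤ Real.sinh R := Real.sinh_le_sinh.mpr hx.2
    have h3 : Real.cosh x ≤ Real.cosh R := by
      rw [Real.cosh_le_cosh, abs_of_nonneg hx.1, abs_of_nonneg hR]; exact hx.2
    rw [Real.norm_eq_abs, abs_of_nonneg (by positivity)]
    have h4 : Real.sinh x ^ (N-1) ≤ Real.sinh R ^ (N-1) := pow_le_pow_left₀ h1 h2 _
    have h6 : (0:ℝ) ≤ (N:ℝ) * Real.sinh x ^ (N-1) :=
      mul_nonneg (Nat.cast_nonneg N) (pow_nonneg h1 _)
    have h7 : (N:ℝ) * Real.sinh x ^ (N-1) ≤ (N:ℝ) * Real.sinh R ^ (N-1) :=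
      mul_le_mul_of_nonneg_left h4 (Nat.cast_nonneg N)
    exact mul_le_mul h7 h3 (Real.cosh_pos x).le
      (mul_nonneg (Nat.cast_nonneg N) (pow_nonneg (h1.trans h2) _))
  have := Convex.norm_image_sub_le_of_norm_hasDerivWithin_le hderiv hbound
    (convex_Icc 0 R) hb ha
  rw [Real.norm_eq_abs, Real.norm_eq_abs] at this
  exact this

lemma key_est (N : ℕ) (r t : ℝ) (hr : 0 < r) (ht : |t| ≤ 1/2) :
    |Gint N (r*(1+t)) - Gint N r - r * Real.sinh (r/2) ^ N * t|
      ≤ (r^2 * N * Real.sinh (3*r/4) ^ (N-1) * Real.cosh (3*r/4) / 2) * t^2 := by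
  have habs := abs_le.mp ht
  set C2 := (N : ℝ) * Real.sinh (3*r/4) ^ (N-1) * Real.cosh (3*r/4) with hC2
  have hC2nn : 0 ≤ C2 := by
    have := Real.sinh_nonneg_iff.mpr (by linarith : (0:ℝ) ≤ 3*r/4)
    have := Real.cosh_pos (3*r/4)
    positivity
  set ψ : ℝ → ℝ := fun s => Gint N (r*(1+s)) - r * Real.sinh (r/2) ^ N * s with hψ
  have hψderiv : ∀ s : ℝ, HasDerivAt ψ
      (Real.sinh ((r*(1+s))/2) ^ N * r - r * Real.sinh (r/2) ^ N) s := by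
    intro s
    have h1 : HasDerivAt (fun s : ℝ => r*(1+s)) r s := by
      simpa using ((hasDerivAt_id s).const_add 1).const_mul r
    have h2 := (Gint_hasDerivAt N (r*(1+s))).comp s h1
    have h3 : HasDerivAt (fun s : ℝ => r * Real.sinh (r/2) ^ N * s)
        (r * Real.sinh (r/2) ^ N) s := by
      simpa using (hasDerivAt_id s).const_mul (r * Real.sinh (r/2) ^ N)
    exact h2.sub h3
  have hbound : ∀ s ∈ Set.uIcc (0:ℝ) t,
      ‖Real.sinh ((r*(1+s))/2) ^ N * r - r * Real.sinh (r/2) ^ N‖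
        ≤ r^2 * C2 * |t| / 2 := by
    intro s hs
    have hs' : |s| ≤ |t| := by
      rw [Set.uIcc_eq_union] at hs
      rcases hs with hs | hs <;>
      · rw [abs_le]
        rcases Set.mem_Icc.mp hs with ⟨h1, h2⟩
        constructor <;> linarith [neg_abs_le t, le_abs_self t, abs_nonneg t]
    have hs2 : |s| ≤ 1/2 := hs'.trans ht
    have hsl := abs_le.mp hs2
    have hmem1 : (r*(1+s))/2 ∈ Set.Icc (0:ℝ) (3*r/4) := by
      constructor <;> nlinarith
    have hmem2 : r/2 ∈ Set.Icc (0:ℝ) (3*r/4) := by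
      constructor <;> nlinarith
    have hlip := sinh_pow_lipschitz N (3*r/4) (by linarith) _ _ hmem1 hmem2
    rw [Real.norm_eq_abs]
    have harg : |(r*(1+s))/2 - r/2| = r * |s| / 2 := by
      rw [show (r*(1+s))/2 - r/2 = r*s/2 by ring, abs_div, abs_mul,
        abs_of_nonneg hr.le, abs_of_nonneg (by norm_num : (0:ℝ) ≤ 2)]
    have h5 : Real.sinh ((r*(1+s))/2) ^ N * r - r * Real.sinh (r/2) ^ N
        = r * (Real.sinh ((r*(1+s))/2) ^ N - Real.sinh (r/2) ^ N) := by ring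
    rw [h5, abs_mul, abs_of_nonneg hr.le]
    calc r * |Real.sinh ((r*(1+s))/2) ^ N - Real.sinh (r/2) ^ N|
        ≤ r * (C2 * |(r*(1+s))/2 - r/2|) :=
          mul_le_mul_of_nonneg_left (by rw [hC2]; exact hlip) hr.le
      _ = r^2 * C2 * |s| / 2 := by rw [harg]; ring
      _ ≤ r^2 * C2 * |t| / 2 := by
          have h8 : r^2 * C2 * |s| ≤ r^2 * C2 * |t| :=
            mul_le_mul_of_nonneg_left hs' (mul_nonneg (by positivity) hC2nn)
          linarith
  have hfin := Convex.norm_image_sub_le_of_norm_hasDerivWithin_le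
    (fun s _ => (hψderiv s).hasDerivWithinAt) hbound (convex_uIcc 0 t)
    (Set.left_mem_uIcc) (Set.right_mem_uIcc)
  rw [Real.norm_eq_abs, Real.norm_eq_abs, sub_zero] at hfin
  have hψt : ψ t - ψ 0 = Gint N (r*(1+t)) - Gint N r - r * Real.sinh (r/2) ^ N * t := by
    rw [hψ]; norm_num; ring
  rw [hψt] at hfin
  calc |Gint N (r*(1+t)) - Gint N r - r * Real.sinh (r/2) ^ N * t|
      ≤ r^2 * C2 * |t| / 2 * |t| := hfin
    _ = r^2 * C2 / 2 * (|t| * |t|) := by ring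
    _ = (r^2 * N * Real.sinh (3*r/4) ^ (N-1) * Real.cosh (3*r/4) / 2) * t^2 := by
        rw [abs_mul_abs_self, hC2]; ring


lemma const_est (N : ℕ) (hN : 1 ≤ N) (r r0 : ℝ) (hr : 0 < r) (hrr0 : r ≤ r0) :
    r^2 * N * Real.sinh (3*r/4) ^ (N-1) * Real.cosh (3*r/4) / 2
      ≤ ((N:ℝ) * (2 * Real.cosh (3*r0/4))^N) * (r * Real.sinh (r/2) ^ N) := by
  obtain ⟨K, rfl⟩ : ∃ K, N = K + 1 := ⟨N-1, by omega⟩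
  simp only [Nat.add_sub_cancel]
  set s1 := Real.sinh (r/2) with hs1def
  set c1 := Real.cosh (3*r/4) with hc1def
  set c0 := Real.cosh (3*r0/4) with hc0def
  have hs1 : 0 < s1 := Real.sinh_pos_iff.mpr (by linarith)
  have hc1 : (1:ℝ) ≤ c1 := Real.one_le_cosh _
  have hc0 : (1:ℝ) ≤ c0 := Real.one_le_cosh _
  have hc10 : c1 ≤ c0 := by
    rw [hc1def, hc0def, Real.cosh_le_cosh, abs_of_nonneg (by linarith), abs_of_nonneg (by linarith)]
    linarith
  have hA : r ≤ 2 * s1 := by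
    have := Real.self_le_sinh_iff.mpr (by linarith : (0:ℝ) ≤ r/2)
    rw [hs1def]; linarith
  have h34 : Real.sinh (3*r/4) ≤ 2 * s1 * c1 := by
    have he : 3*r/4 = r/2 + r/4 := by ring
    rw [he, Real.sinh_add]
    have h1 : Real.cosh (r/4) ≤ c1 := by
      rw [hc1def, Real.cosh_le_cosh, abs_of_nonneg (by linarith), abs_of_nonneg (by linarith)]
      linarith
    have h2 : Real.cosh (r/2) ≤ c1 := by
      rw [hc1def, Real.cosh_le_cosh, abs_of_nonneg (by linarith), abs_of_nonneg (by linarith)]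
      linarith
    have h3 : Real.sinh (r/4) ≤ s1 := by
      rw [hs1def, Real.sinh_le_sinh]; linarith
    have h4 : 0 ≤ Real.sinh (r/4) := Real.sinh_nonneg_iff.mpr (by linarith)
    have h5 : 0 < Real.cosh (r/2) := Real.cosh_pos _
    have h6 : 0 < Real.cosh (r/4) := Real.cosh_pos _
    nlinarith
  have hB : Real.sinh (3*r/4) ^ K ≤ (2*s1*c0)^K := by
    apply pow_le_pow_left₀ (Real.sinh_nonneg_iff.mpr (by linarith))
    nlinarith
  have h1 : r * Real.sinh (3*r/4)^K * c1 ≤ (2*s1) * (2*s1*c0)^K * c0 := by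
    apply mul_le_mul (mul_le_mul hA hB (pow_nonneg (Real.sinh_nonneg_iff.mpr (by linarith)) _)
      (by linarith)) hc10 (by rw [hc1def]; exact (Real.cosh_pos _).le) (by positivity)
  calc r^2 * (K+1:ℕ) * Real.sinh (3*r/4) ^ K * c1 / 2
      = (r * ((K:ℝ)+1) / 2) * (r * Real.sinh (3*r/4)^K * c1) := by push_cast; ring
    _ ≤ (r * ((K:ℝ)+1) / 2) * ((2*s1) * (2*s1*c0)^K * c0) := by
        apply mul_le_mul_of_nonneg_left h1 (by positivity)
    _ = (((K+1:ℕ):ℝ) * (2*c0)^(K+1) * (r * s1^(K+1))) / 2 := by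
        simp only [mul_pow]
        push_cast
        ring
    _ ≤ ((K+1:ℕ):ℝ) * (2*c0)^(K+1) * (r * s1^(K+1)) := by
        apply half_le_self
        have : (0:ℝ) ≤ (2*c0)^(K+1) := by positivity
        have h7 : (0:ℝ) ≤ s1^(K+1) := pow_nonneg hs1.le _
        positivity


/-- Consequence of the barycenter constraint: the first-order spherical harmonic
coefficients of `u` are quadratically small in `u`. -/
theorem barycenter_constraint_bound (n : ℕ) (hn : 1 ≤ n) (r0 : ℝ) (hr0 : 0 < r0) :
    ∃ C : ℝ, 0 ≤ C ∧
      ∀ r : ℝ, 0 < r → r ≤ r0 →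
      ∀ u : EuclideanSpace ℝ (Fin (2 * n)) → ℝ,
        Measurable u →
        (∀ w ∈ Metric.sphere (0 : EuclideanSpace ℝ (Fin (2 * n))) 1, |u w| ≤ 1 / 2) →
        (∫ w in Metric.sphere (0 : EuclideanSpace ℝ (Fin (2 * n))) 1,
            ((1 + u w) * ∫ ρ in (0:ℝ)..r, Real.sinh (ρ * (1 + u w) / 2) ^ (2 * n)) • w
            ∂μH[2 * (n : ℝ) - 1]
          = (0 : EuclideanSpace ℝ (Fin (2 * n)))) →
        ‖∫ w in Metric.sphere (0 : EuclideanSpace ℝ (Fin (2 * n))) 1, u w • w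
            ∂μH[2 * (n : ℝ) - 1]‖
          ≤ C * ∫ w in Metric.sphere (0 : EuclideanSpace ℝ (Fin (2 * n))) 1, (u w) ^ 2
              ∂μH[2 * (n : ℝ) - 1] := by
  classical
  have hN1 : 1 ≤ 2 * n := by omega
  refine ⟨((2*n : ℕ) : ℝ) * (2 * Real.cosh (3*r0/4))^(2*n), by positivity, ?_⟩
  intro r hr hrr0 u hu hub hconstraint
  have hd : 2 * (n : ℝ) - 1 = ((2*n - 1 : ℕ) : ℝ) := by
    push_cast [hN1]
    ring
  rw [hd] at hconstraint ⊢
  set S := Metric.sphere (0 : EuclideanSpace ℝ (Fin (2*n))) 1 with hS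
  set d := ((2*n - 1 : ℕ) : ℝ) with hdd
  have hd0 : 0 ≤ d := Nat.cast_nonneg _
  have hSmeas : MeasurableSet S := Metric.isClosed_sphere.measurableSet
  have hfin : μH[d] S < ⊤ := sphere_hausdorff_finite' (2*n) hN1
  haveI : IsFiniteMeasure (μH[d].restrict S) :=
    ⟨by rwa [Measure.restrict_apply_univ]⟩
  have hae : ∀ᵐ w ∂(μH[d].restrict S), w ∈ S := MeasureTheory.ae_restrict_mem hSmeas
  have hGcont : Continuous (Gint (2*n)) := by
    rw [continuous_iff_continuousAt]
    exact fun x => (Gint_hasDerivAt (2*n) x).continuousAt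
  -- substitution
  have hsub : ∀ w, ((1 + u w) * ∫ ρ in (0:ℝ)..r, Real.sinh (ρ * (1 + u w) / 2) ^ (2 * n))
      = Gint (2*n) (r * (1 + u w)) := by
    intro w
    have := intervalIntegral.mul_integral_comp_mul_right (a := (0:ℝ)) (b := r)
      (f := fun s => Real.sinh (s/2) ^ (2*n)) (c := 1 + u w)
    simpa [Gint] using this
  simp only [hsub] at hconstraint
  set c := r * Real.sinh (r/2) ^ (2*n) with hc
  have hcpos : 0 < c := by
    have h1 : 0 < Real.sinh (r/2) := Real.sinh_pos_iff.mpr (by linarith)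
    positivity
  set M := r^2 * (2*n : ℕ) * Real.sinh (3*r/4) ^ (2*n - 1) * Real.cosh (3*r/4) / 2 with hM
  have hsh34 : 0 ≤ Real.sinh (3*r/4) := Real.sinh_nonneg_iff.mpr (by linarith)
  have hM0 : 0 ≤ M := by
    rw [hM]
    have := Real.cosh_pos (3*r/4)
    have := pow_nonneg hsh34 (2*n - 1)
    positivity
  set g := fun w : EuclideanSpace ℝ (Fin (2*n)) => Gint (2*n) (r * (1 + u w)) - Gint (2*n) r - c * u w with hgdef
  have hg_meas : Measurable g := by
    have h1 : Measurable fun w : EuclideanSpace ℝ (Fin (2*n)) => r * (1 + u w) := by fun_prop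
    exact ((hGcont.measurable.comp h1).sub measurable_const).sub (hu.const_mul c)
  have hg_bound : ∀ w ∈ S, |g w| ≤ M * (u w)^2 := by
    intro w hw
    have := key_est (2*n) r (u w) hr (hub w hw)
    simpa [hgdef, hM, hc] using this
  have husq : ∀ w ∈ S, (u w)^2 ≤ 1/4 := by
    intro w hw
    have h1 := hub w hw
    have h2 : (u w)^2 = |u w|^2 := (sq_abs _).symm
    nlinarith [abs_nonneg (u w)]
  -- integrability
  have hint_id : Integrable (fun w : EuclideanSpace ℝ (Fin (2*n)) => w) (μH[d].restrict S) := by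
    refine ⟨measurable_id.aestronglyMeasurable, HasFiniteIntegral.of_bounded (C := 1) ?_⟩
    filter_upwards [hae] with w hw
    rw [mem_sphere_zero_iff_norm.mp hw]
  have hint4 : Integrable (fun w : EuclideanSpace ℝ (Fin (2*n)) => u w • w) (μH[d].restrict S) := by
    refine ⟨(hu.smul measurable_id).aestronglyMeasurable,
      HasFiniteIntegral.of_bounded (C := 1/2) ?_⟩
    filter_upwards [hae] with w hw
    rw [norm_smul, mem_sphere_zero_iff_norm.mp hw, Real.norm_eq_abs, mul_one]
    exact hub w hw
  have hint2 : Integrable (fun w : EuclideanSpace ℝ (Fin (2*n)) => (Gint (2*n) r) • w) (μH[d].restrict S) :=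
    hint_id.smul (Gint (2*n) r)
  have hint3 : Integrable (fun w : EuclideanSpace ℝ (Fin (2*n)) => c • (u w • w)) (μH[d].restrict S) :=
    hint4.smul c
  have hintg : Integrable (fun w : EuclideanSpace ℝ (Fin (2*n)) => g w • w) (μH[d].restrict S) := by
    refine ⟨(hg_meas.smul measurable_id).aestronglyMeasurable,
      HasFiniteIntegral.of_bounded (C := M * (1/4)) ?_⟩
    filter_upwards [hae] with w hw
    rw [norm_smul, mem_sphere_zero_iff_norm.mp hw, Real.norm_eq_abs, mul_one]
    calc |g w| ≤ M * (u w)^2 := hg_bound w hw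
      _ ≤ M * (1/4) := mul_le_mul_of_nonneg_left (husq w hw) hM0
  have hint5 : Integrable (fun w : EuclideanSpace ℝ (Fin (2*n)) => (u w)^2) (μH[d].restrict S) := by
    refine ⟨(hu.pow_const 2).aestronglyMeasurable,
      HasFiniteIntegral.of_bounded (C := 1/4) ?_⟩
    filter_upwards [hae] with w hw
    rw [Real.norm_eq_abs, abs_of_nonneg (sq_nonneg _)]
    exact husq w hw
  -- decompose the constraint
  have hsplit : (fun w : EuclideanSpace ℝ (Fin (2*n)) => (Gint (2*n) (r * (1 + u w))) • w)
      = fun w : EuclideanSpace ℝ (Fin (2*n)) => (Gint (2*n) r) • w + c • (u w • w) + g w • w := by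
    funext w
    have hgw : Gint (2*n) (r * (1 + u w)) = Gint (2*n) r + c * u w + g w := by
      simp only [hgdef]
      ring
    rw [hgw, add_smul, add_smul, mul_smul]
  rw [hsplit] at hconstraint
  have hint23 : Integrable (fun w : EuclideanSpace ℝ (Fin (2*n)) =>
      Gint (2*n) r • w + c • (u w • w)) (μH[d].restrict S) := hint2.add hint3
  rw [MeasureTheory.integral_add hint23 hintg,
    MeasureTheory.integral_add hint2 hint3] at hconstraint
  have hzero : ∫ w in S, w ∂μH[d] = 0 := integral_id_sphere_zero (2*n) d hd0
  rw [MeasureTheory.integral_smul, MeasureTheory.integral_smul, hzero, smul_zero,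
    zero_add] at hconstraint
  -- hconstraint : c • ∫ u w • w + ∫ g w • w = 0
  have hkey : c • (∫ w in S, u w • w ∂μH[d]) = - ∫ w in S, g w • w ∂μH[d] :=
    eq_neg_of_add_eq_zero_left hconstraint
  have hI2nn : (0:ℝ) ≤ ∫ w in S, (u w)^2 ∂μH[d] :=
    MeasureTheory.integral_nonneg (fun w => sq_nonneg _)
  have hnorm_le : c * ‖∫ w in S, u w • w ∂μH[d]‖ ≤ M * ∫ w in S, (u w)^2 ∂μH[d] := by
    have h1 : ‖c • ∫ w in S, u w • w ∂μH[d]‖ = c * ‖∫ w in S, u w • w ∂μH[d]‖ := by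
      rw [norm_smul, Real.norm_eq_abs, abs_of_pos hcpos]
    have h2 : ‖∫ w in S, g w • w ∂μH[d]‖ ≤ ∫ w in S, M * (u w)^2 ∂μH[d] := by
      calc ‖∫ w in S, g w • w ∂μH[d]‖ ≤ ∫ w in S, ‖g w • w‖ ∂μH[d] :=
            MeasureTheory.norm_integral_le_integral_norm _
        _ ≤ ∫ w in S, M * (u w)^2 ∂μH[d] := by
            apply MeasureTheory.integral_mono_ae hintg.norm (hint5.const_mul M)
            filter_upwards [hae] with w hw
            rw [norm_smul, mem_sphere_zero_iff_norm.mp hw, Real.norm_eq_abs, mul_one]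
            exact hg_bound w hw
    have h3 : ∫ w in S, M * (u w)^2 ∂μH[d] = M * ∫ w in S, (u w)^2 ∂μH[d] :=
      MeasureTheory.integral_const_mul M _
    rw [← h1, hkey, norm_neg]
    rw [h3] at h2
    exact h2
  have hMC := const_est (2*n) hN1 r r0 hr hrr0
  have hfinal : c * ‖∫ w in S, u w • w ∂μH[d]‖
      ≤ c * (((2*n : ℕ) : ℝ) * (2 * Real.cosh (3*r0/4))^(2*n) * ∫ w in S, (u w)^2 ∂μH[d]) := by
    calc c * ‖∫ w in S, u w • w ∂μH[d]‖ ≤ M * ∫ w in S, (u w)^2 ∂μH[d] := hnorm_le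
      _ ≤ (((2*n : ℕ) : ℝ) * (2 * Real.cosh (3*r0/4))^(2*n) * (r * Real.sinh (r/2) ^ (2*n)))
            * ∫ w in S, (u w)^2 ∂μH[d] := by
          apply mul_le_mul_of_nonneg_right _ hI2nn
          rw [hM]
          exact hMC
      _ = c * (((2*n : ℕ) : ℝ) * (2 * Real.cosh (3*r0/4))^(2*n) * ∫ w in S, (u w)^2 ∂μH[d]) := by
          rw [hc]; ring
  exact le_of_mul_le_mul_left hfinal hcpos
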